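/- Lemma (monotonicity of h_k along trajectories). If γ is a trajectory of W_k with γ(t) ∈ Δ_k for all t ∈ ℝ, then the function t ↦ h_k(γ(t)) = Σ_{j=0}^k j · γ_j(t) is monotone nondecreasing on ℝ; moreover it is strictly increasing unless γ is constant, in which case γ is constantly equal to a vertex of Δ_k. -/

import Mathlib

open Finset

/-- The simplicial vector field `W_k` on `ℝ^{k+1}`, given componentwise by
`(W_k x)_m = x_m * (∑_{i<m} x_i − ∑_{i>m} x_i)`. -/
noncomputable def Wfield (k : ℕ) (x : Fin (k + 1) → ℝ) : Fin (k + 1) → ℝ :=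
  fun m => x m * ((∑ i ∈ univ.filter (fun i => i < m), x i)
                - (∑ i ∈ univ.filter (fun i => m < i), x i))

/-- Key algebraic identity: the derivative of `h_k` along `W_k`. -/
lemma Wfield_hk_sum (k : ℕ) (x : Fin (k + 1) → ℝ) :
    ∑ j : Fin (k + 1), ((j : ℕ) : ℝ) * Wfield k x j
      = ∑ m : Fin (k + 1), ∑ i : Fin (k + 1),
          if i < m then (((m : ℕ) : ℝ) - ((i : ℕ) : ℝ)) * (x i * x m) else 0 := by
  have h1 : ∀ m : Fin (k + 1),
      ((m : ℕ) : ℝ) * Wfield k x m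
        = (∑ i : Fin (k + 1), if i < m then ((m : ℕ) : ℝ) * (x i * x m) else 0)
        - (∑ i : Fin (k + 1), if m < i then ((m : ℕ) : ℝ) * (x i * x m) else 0) := by
    intro m
    simp only [Wfield, Finset.sum_filter, mul_sub, Finset.mul_sum]
    congr 1 <;> exact Finset.sum_congr rfl fun i _ => by split <;> ring
  rw [Finset.sum_congr rfl fun m _ => h1 m, Finset.sum_sub_distrib]
  have h2 : (∑ m : Fin (k + 1), ∑ i : Fin (k + 1),
      if m < i then ((m : ℕ) : ℝ) * (x i * x m) else 0)
      = ∑ m : Fin (k + 1), ∑ i : Fin (k + 1),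
      if i < m then ((i : ℕ) : ℝ) * (x m * x i) else 0 := Finset.sum_comm
  rw [h2, ← Finset.sum_sub_distrib]
  refine Finset.sum_congr rfl fun m _ => ?_
  rw [← Finset.sum_sub_distrib]
  exact Finset.sum_congr rfl fun i _ => by split <;> ring

lemma Wfield_hk_sum_nonneg {k : ℕ} {x : Fin (k + 1) → ℝ}
    (hx : x ∈ stdSimplex ℝ (Fin (k + 1))) :
    0 ≤ ∑ j : Fin (k + 1), ((j : ℕ) : ℝ) * Wfield k x j := by
  rw [Wfield_hk_sum]
  refine Finset.sum_nonneg fun m _ => Finset.sum_nonneg fun i _ => ?_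
  split
  · rename_i h
    have : ((i : ℕ) : ℝ) ≤ ((m : ℕ) : ℝ) := by exact_mod_cast (Fin.lt_def.mp h).le
    exact mul_nonneg (by linarith) (mul_nonneg (hx.1 i) (hx.1 m))
  · exact le_rfl

/-- If a point of the simplex has some coordinate equal to 1, it is a vertex. -/
lemma stdSimplex_eq_single {k : ℕ} {x : Fin (k + 1) → ℝ}
    (hx : x ∈ stdSimplex ℝ (Fin (k + 1))) {j : Fin (k + 1)} (hj : x j = 1) :
    x = Pi.single j 1 := by
  have hsum : ∑ i : Fin (k + 1), x i = 1 := hx.2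
  have hz : ∀ i ∈ univ.erase j, x i = 0 := by
    have h0 : ∑ i ∈ univ.erase j, x i = 0 := by
      have := Finset.add_sum_erase univ x (Finset.mem_univ j)
      rw [hsum, hj] at this
      linarith
    exact (Finset.sum_eq_zero_iff_of_nonneg fun i _ => hx.1 i).mp h0
  funext i
  by_cases h : i = j
  · subst h; simpa [Pi.single_eq_same] using hj
  · rw [Pi.single_eq_of_ne h]
    exact hz i (Finset.mem_erase.mpr ⟨h, Finset.mem_univ i⟩)

/-- If all products of distinct coordinates vanish, the point is a vertex. -/
lemma stdSimplex_vertex_of_prods {k : ℕ} {x : Fin (k + 1) → ℝ}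
    (hx : x ∈ stdSimplex ℝ (Fin (k + 1)))
    (hp : ∀ i m : Fin (k + 1), i < m → x i * x m = 0) :
    ∃ j : Fin (k + 1), x = Pi.single j 1 := by
  have hsum : ∑ i : Fin (k + 1), x i = 1 := hx.2
  have hex : ∃ j : Fin (k + 1), x j ≠ 0 := by
    by_contra h
    push_neg at h
    simp [Finset.sum_congr rfl fun i _ => h i] at hsum
  obtain ⟨j, hj⟩ := hex
  have hz : ∀ i, i ≠ j → x i = 0 := by
    intro i hij
    rcases lt_or_gt_of_ne hij with h | h
    · have := hp i j h
      rcases mul_eq_zero.mp this with h' | h'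
      · exact h'
      · exact absurd h' hj
    · have := hp j i h
      rcases mul_eq_zero.mp this with h' | h'
      · exact absurd h' hj
      · exact h'
  have hj1 : x j = 1 := by
    rw [← hsum, Finset.sum_eq_single j (fun i _ hi => hz i hi) (fun h => absurd (Finset.mem_univ j) h)]
  exact ⟨j, stdSimplex_eq_single hx hj1⟩

/-- A zero of `W_k` in the simplex is a vertex. -/
lemma stdSimplex_vertex_of_Wfield_zero {k : ℕ} {x : Fin (k + 1) → ℝ}
    (hx : x ∈ stdSimplex ℝ (Fin (k + 1))) (hW : Wfield k x = 0) :
    ∃ j : Fin (k + 1), x = Pi.single j 1 := by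
  refine stdSimplex_vertex_of_prods hx fun i m him => ?_
  by_contra h
  have hi : 0 < x i := lt_of_le_of_ne (hx.1 i) fun h' => h (by rw [← h', zero_mul])
  have hm : 0 < x m := lt_of_le_of_ne (hx.1 m) fun h' => h (by rw [← h', mul_zero])
  set s : Finset (Fin (k + 1)) := univ.filter (fun j => x j ≠ 0) with hs
  have hms : m ∈ s := by simp [hs, hm.ne']
  have hsne : s.Nonempty := ⟨m, hms⟩
  set M := s.max' hsne with hM
  have hMs : M ∈ s := s.max'_mem hsne
  have hMpos : 0 < x M := lt_of_le_of_ne (hx.1 M) (by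
    have := (Finset.mem_filter.mp hMs).2; exact fun h' => this h'.symm)
  have hmM : m ≤ M := s.le_max' m hms
  have hiM : i < M := lt_of_lt_of_le him hmM
  have hgt : ∑ j ∈ univ.filter (fun j => M < j), x j = 0 := by
    refine Finset.sum_eq_zero fun j hj => ?_
    have hMj : M < j := (Finset.mem_filter.mp hj).2
    by_contra h'
    exact absurd (s.le_max' j (by simp [hs, h'])) (not_le.mpr hMj)
  have hlt : 0 < ∑ j ∈ univ.filter (fun j => j < M), x j := by
    refine lt_of_lt_of_le hi (Finset.single_le_sum (fun j _ => hx.1 j) ?_)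
    simp [hiM]
  have : Wfield k x M = 0 := by rw [hW]; rfl
  rw [Wfield, hgt, sub_zero] at this
  exact absurd this (mul_pos hMpos hlt).ne'

/-- Monotonicity of `h_k(x) = ∑_j j·x_j` along trajectories of `W_k` inside the
simplex: `t ↦ h_k (γ t)` is monotone nondecreasing; it is strictly increasing
unless `γ` is constant, in which case `γ` is constantly equal to a vertex. -/
theorem Wfield_hk_monotone (k : ℕ) (γ : ℝ → Fin (k + 1) → ℝ)
    (hγ : ∀ t : ℝ, HasDerivAt γ (Wfield k (γ t)) t)
    (hΔ : ∀ t : ℝ, γ t ∈ stdSimplex ℝ (Fin (k + 1))) :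
    Monotone (fun t : ℝ => ∑ j : Fin (k + 1), ((j : ℕ) : ℝ) * γ t j) ∧
    ((∃ c, ∀ t : ℝ, γ t = c) → ∃ j : Fin (k + 1), ∀ t : ℝ, γ t = Pi.single j 1) ∧
    (¬ (∃ c, ∀ t : ℝ, γ t = c) →
      StrictMono (fun t : ℝ => ∑ j : Fin (k + 1), ((j : ℕ) : ℝ) * γ t j)) := by
  set F : ℝ → ℝ := fun t => ∑ j : Fin (k + 1), ((j : ℕ) : ℝ) * γ t j with hFdef
  have hcomp : ∀ t (j : Fin (k + 1)),
      HasDerivAt (fun t => γ t j) (Wfield k (γ t) j) t :=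
    fun t j => (hasDerivAt_pi.mp (hγ t)) j
  have hF : ∀ t, HasDerivAt F (∑ j : Fin (k + 1), ((j : ℕ) : ℝ) * Wfield k (γ t) j) t := by
    intro t
    exact HasDerivAt.fun_sum fun j _ => (hcomp t j).const_mul _
  have hmono : Monotone F := by
    refine monotone_of_deriv_nonneg (fun t => (hF t).differentiableAt) fun t => ?_
    rw [(hF t).deriv]
    exact Wfield_hk_sum_nonneg (hΔ t)
  refine ⟨hmono, ?_, ?_⟩
  · rintro ⟨c, hc⟩
    have hγeq : γ = fun _ => c := funext hc
    have hW0 : Wfield k c = 0 := by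
      have h1 : HasDerivAt γ (Wfield k c) 0 := by
        have := hγ 0; rwa [hc 0] at this
      have h2 : HasDerivAt γ 0 0 := by rw [hγeq]; exact hasDerivAt_const _ _
      exact h1.unique h2
    obtain ⟨j, hj⟩ := stdSimplex_vertex_of_Wfield_zero (by rw [← hc 0]; exact hΔ 0) hW0
    exact ⟨j, fun t => by rw [hc t, hj]⟩
  · intro hne
    refine hmono.strictMono_of_injective ?_
    intro a b heq
    by_contra hab
    -- WLOG a < b
    wlog hlt : a < b generalizing a b
    · exact this heq.symm (Ne.symm hab) (lt_of_le_of_ne (not_lt.mp hlt) (Ne.symm hab))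
    -- F is constant on [a, b]
    have hconst : ∀ t ∈ Set.Ioo a b, F t = F a := fun t ht =>
      le_antisymm (heq ▸ hmono ht.2.le) (hmono ht.1.le)
    set t₀ : ℝ := (a + b) / 2 with ht₀def
    have ht₀ : t₀ ∈ Set.Ioo a b := ⟨by linarith, by linarith⟩
    have hev : (fun _ : ℝ => F a) =ᶠ[nhds t₀] F :=
      Filter.eventually_of_mem (Ioo_mem_nhds ht₀.1 ht₀.2) fun t ht => (hconst t ht).symm
    have hD0 : (∑ j : Fin (k + 1), ((j : ℕ) : ℝ) * Wfield k (γ t₀) j) = 0 :=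
      ((hF t₀).congr_of_eventuallyEq hev).unique (hasDerivAt_const _ _)
    -- hence all pairwise products at t₀ vanish, so γ t₀ is a vertex
    have hprods : ∀ i m : Fin (k + 1), i < m → γ t₀ i * γ t₀ m = 0 := by
      rw [Wfield_hk_sum] at hD0
      have hnn : ∀ m ∈ (univ : Finset (Fin (k + 1))), 0 ≤ ∑ i : Fin (k + 1),
          if i < m then (((m : ℕ) : ℝ) - ((i : ℕ) : ℝ)) * (γ t₀ i * γ t₀ m) else 0 := by
        intro m _
        refine Finset.sum_nonneg fun i _ => ?_
        split
        · rename_i h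
          have : ((i : ℕ) : ℝ) ≤ ((m : ℕ) : ℝ) := by exact_mod_cast (Fin.lt_def.mp h).le
          exact mul_nonneg (by linarith) (mul_nonneg ((hΔ t₀).1 i) ((hΔ t₀).1 m))
        · exact le_rfl
      intro i m him
      have h1 := (Finset.sum_eq_zero_iff_of_nonneg hnn).mp hD0 m (Finset.mem_univ m)
      have hnn2 : ∀ i ∈ (univ : Finset (Fin (k + 1))), (0:ℝ) ≤
          if i < m then (((m : ℕ) : ℝ) - ((i : ℕ) : ℝ)) * (γ t₀ i * γ t₀ m) else 0 := by
        intro i _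
        split
        · rename_i h
          have : ((i : ℕ) : ℝ) ≤ ((m : ℕ) : ℝ) := by exact_mod_cast (Fin.lt_def.mp h).le
          exact mul_nonneg (by linarith) (mul_nonneg ((hΔ t₀).1 i) ((hΔ t₀).1 m))
        · exact le_rfl
      have h2 := (Finset.sum_eq_zero_iff_of_nonneg hnn2).mp h1 i (Finset.mem_univ i)
      rw [if_pos him] at h2
      have hpos : (0:ℝ) < ((m : ℕ) : ℝ) - ((i : ℕ) : ℝ) := by
        have : ((i : ℕ) : ℝ) < ((m : ℕ) : ℝ) := by exact_mod_cast Fin.lt_def.mp him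
        linarith
      rcases mul_eq_zero.mp h2 with h' | h'
      · exact absurd h' hpos.ne'
      · exact h'
    obtain ⟨j, hj⟩ := stdSimplex_vertex_of_prods (hΔ t₀) hprods
    -- γ t₀ j = 1; Gronwall argument: γ t j = 1 for all t
    have hj1 : γ t₀ j = 1 := by rw [hj, Pi.single_eq_same]
    -- bound on the derivative of each coordinate
    have hbound : ∀ t, |Wfield k (γ t) j| ≤ 1 - γ t j := by
      intro t
      set x := γ t with hx
      have hxs := hΔ t
      have hAB : (∑ i ∈ univ.filter (fun i => i < j), x i)
          + (∑ i ∈ univ.filter (fun i => j < i), x i) = 1 - x j := by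
        have h3 : (∑ i ∈ univ.filter (fun i => i < j), x i)
            + (∑ i ∈ univ.filter (fun i => j < i), x i)
            + (∑ i : Fin (k+1), if i = j then x i else 0) = ∑ i : Fin (k+1), x i := by
          simp only [Finset.sum_filter, ← Finset.sum_add_distrib]
          refine Finset.sum_congr rfl fun i _ => ?_
          rcases lt_trichotomy i j with h | h | h
          · simp [h, h.ne, not_lt.mpr h.le]
          · simp [h]
          · simp [h, h.ne', not_lt.mpr h.le]
        rw [Finset.sum_ite_eq' univ j x] at h3
        simp only [Finset.mem_univ, if_true] at h3
        rw [hxs.2] at h3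
        linarith
      have hA : 0 ≤ ∑ i ∈ univ.filter (fun i => i < j), x i :=
        Finset.sum_nonneg fun i _ => hxs.1 i
      have hB : 0 ≤ ∑ i ∈ univ.filter (fun i => j < i), x i :=
        Finset.sum_nonneg fun i _ => hxs.1 i
      have hxj1 : x j ≤ 1 := by
        have := Finset.single_le_sum (fun i _ => hxs.1 i) (Finset.mem_univ j)
        rwa [hxs.2] at this
      rw [Wfield, abs_mul, abs_of_nonneg (hxs.1 j)]
      have habs : |(∑ i ∈ univ.filter (fun i => i < j), x i)
          - (∑ i ∈ univ.filter (fun i => j < i), x i)| ≤ 1 - x j := by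
        rw [abs_sub_le_iff]; constructor <;> linarith
      calc x j * |(∑ i ∈ univ.filter (fun i => i < j), x i)
            - (∑ i ∈ univ.filter (fun i => j < i), x i)| ≤ 1 * (1 - x j) := by
            apply mul_le_mul hxj1 habs (abs_nonneg _) zero_le_one
        _ = 1 - x j := one_mul _
    set g : ℝ → ℝ := fun t => 1 - γ t j with hgdef
    have hg : ∀ t, HasDerivAt g (-(Wfield k (γ t) j)) t := fun t => (hcomp t j).const_sub 1
    have hgnn : ∀ t, 0 ≤ g t := by
      intro t
      have := Finset.single_le_sum (fun i _ => (hΔ t).1 i) (Finset.mem_univ j)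
      rw [(hΔ t).2] at this
      simp only [hgdef]; linarith
    have hgb : ∀ t, ‖-(Wfield k (γ t) j)‖ ≤ 1 * ‖g t‖ + 0 := by
      intro t
      rw [norm_neg, Real.norm_eq_abs, Real.norm_eq_abs, abs_of_nonneg (hgnn t), one_mul, add_zero]
      exact hbound t
    have hg0 : g t₀ = 0 := by simp [hgdef, hj1]
    -- forward direction
    have hfwd : ∀ t, t₀ ≤ t → g t = 0 := by
      intro t ht
      have := norm_le_gronwallBound_of_norm_deriv_right_le
        (f := g) (f' := fun s => -(Wfield k (γ s) j)) (δ := 0) (K := 1) (ε := 0)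
        (a := t₀) (b := t)
        (HasDerivAt.continuousOn fun s _ => hg s)
        (fun s _ => (hg s).hasDerivWithinAt)
        (by rw [Real.norm_eq_abs, hg0, abs_zero])
        (fun s _ => hgb s)
        t ⟨ht, le_rfl⟩
      rw [gronwallBound_ε0_δ0] at this
      have := le_antisymm (by rwa [Real.norm_eq_abs, abs_of_nonneg (hgnn t)] at this) (hgnn t)
      linarith [this]
    -- backward direction via time reversal
    have hbwd : ∀ t, t ≤ t₀ → g t = 0 := by
      intro t ht
      set g2 : ℝ → ℝ := fun s => g (2 * t₀ - s) with hg2def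
      have hg2 : ∀ s, HasDerivAt g2 (Wfield k (γ (2 * t₀ - s)) j) s := by
        intro s
        have hinner : HasDerivAt (fun s : ℝ => 2 * t₀ - s) (-1) s := by
          simpa using (hasDerivAt_id s).const_sub (2 * t₀)
        have := (hg (2 * t₀ - s)).comp s hinner
        simpa [mul_comm, Function.comp_def] using this
      have hg2b : ∀ s, ‖Wfield k (γ (2 * t₀ - s)) j‖ ≤ 1 * ‖g2 s‖ + 0 := by
        intro s
        have := hgb (2 * t₀ - s)
        rwa [norm_neg] at this
      have hg20 : g2 t₀ = 0 := by
        simp only [hg2def]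
        have : 2 * t₀ - t₀ = t₀ := by ring
        rw [this, hg0]
      have hkey := norm_le_gronwallBound_of_norm_deriv_right_le
        (f := g2) (f' := fun s => Wfield k (γ (2 * t₀ - s)) j) (δ := 0) (K := 1) (ε := 0)
        (a := t₀) (b := 2 * t₀ - t)
        (HasDerivAt.continuousOn fun s _ => hg2 s)
        (fun s _ => (hg2 s).hasDerivWithinAt)
        (by rw [Real.norm_eq_abs, hg20, abs_zero])
        (fun s _ => hg2b s)
        (2 * t₀ - t) ⟨by linarith, le_rfl⟩
      rw [gronwallBound_ε0_δ0] at hkey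
      have h5 : g2 (2 * t₀ - t) = g t := by
        simp only [hg2def]
        congr 1
        ring
      rw [h5] at hkey
      have := le_antisymm (by rwa [Real.norm_eq_abs, abs_of_nonneg (hgnn t)] at hkey) (hgnn t)
      linarith [this]
    have hall : ∀ t, γ t j = 1 := by
      intro t
      rcases le_total t t₀ with h | h
      · have := hbwd t h; simp only [hgdef] at this; linarith
      · have := hfwd t h; simp only [hgdef] at this; linarith
    exact hne ⟨Pi.single j 1, fun t => stdSimplex_eq_single (hΔ t) (hall t)⟩
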